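/- For the 3×2 matrix X with rows (a, b), (a, -conj(b)), (b, conj(a)) where a, b ∈ ℤ[i] are both nonzero, one has det(Xᴴ X) ≥ 2. -/

import Mathlib

open Complex Matrix

theorem GaussianInt.toComplex_re (x : GaussianInt) : (x : ℂ).re = x.re :=
  (GaussianInt.intCast_re x).symm

theorem GaussianInt.toComplex_im (x : GaussianInt) : (x : ℂ).im = x.im :=
  (GaussianInt.intCast_im x).symm

theorem qam_alamouti_joint_NVD (a b : GaussianInt) (ha : a ≠ 0) (hb : b ≠ 0) :
    let X : Matrix (Fin 3) (Fin 2) ℂ :=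
      !![(a : ℂ), (b : ℂ);
         (a : ℂ), -(starRingEnd ℂ) (b : ℂ);
         (b : ℂ), (starRingEnd ℂ) (a : ℂ)]
    ((Xᴴ * X).det).im = 0 ∧ 2 ≤ ((Xᴴ * X).det).re := by
  intro X
  have h1 : (1:ℤ) ≤ a.re^2 + a.im^2 := by
    have := GaussianInt.norm_pos.mpr ha
    simp [Zsqrtd.norm] at this
    nlinarith [this]
  have h2 : (1:ℤ) ≤ b.re^2 + b.im^2 := by
    have := GaussianInt.norm_pos.mpr hb
    simp [Zsqrtd.norm] at this
    nlinarith [this]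
  have h1' : (1:ℝ) ≤ (a.re:ℝ)^2 + (a.im:ℝ)^2 := by exact_mod_cast h1
  have h2' : (1:ℝ) ≤ (b.re:ℝ)^2 + (b.im:ℝ)^2 := by exact_mod_cast h2
  have hdet : (Xᴴ * X).det =
      ((2*((a.re:ℝ)^2+(a.im:ℝ)^2+(b.re:ℝ)^2+(b.im:ℝ)^2)^2 : ℝ) : ℂ) := by
    simp only [X, Matrix.det_fin_two, Matrix.mul_apply, Fin.sum_univ_three,
      Matrix.conjTranspose_apply, Matrix.cons_val', Matrix.cons_val_zero, Matrix.cons_val_one,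
      Matrix.head_cons, Matrix.empty_val', Matrix.cons_val_fin_one, Matrix.head_fin_const]
    apply Complex.ext <;>
    · simp [Complex.ext_iff, GaussianInt.toComplex_re, GaussianInt.toComplex_im, -GaussianInt.intCast_re, -GaussianInt.intCast_im]
      norm_cast
      push_cast
      ring
  rw [hdet]
  refine ⟨Complex.ofReal_im _, ?_⟩
  rw [Complex.ofReal_re]
  nlinarith [h1', h2']
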